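/- Every finite simple graph G admits an orientation in which every vertex v has outdegree at most ⌊d_G(v)/2⌋ + 1, where d_G(v) is the degree of v in G. -/

import Mathlib

open Finset

/-- Every finite simple graph admits an orientation in which every vertex `v` has
outdegree at most `⌊d_G(v)/2⌋ + 1`. -/
theorem orientation_outdegree_le_half_degree_add_one {V : Type} [Fintype V]
    [DecidableEq V] (G : SimpleGraph V) [DecidableRel G.Adj] :
    ∃ r : V → V → Prop,
      (∀ v, ¬ r v v) ∧
      (∀ u v, (r u v ∨ r v u) ↔ G.Adj u v) ∧
      (∀ u v, ¬ (r u v ∧ r v u)) ∧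
      (∀ v, {u | r v u}.ncard ≤ G.degree v / 2 + 1) := by
  classical
  set cap : V → ℕ := fun v => G.degree v / 2 + 1 with hcapdef
  let t : {e : Sym2 V // e ∈ G.edgeFinset} → Finset (V × ℕ) :=
    fun e => (univ.filter (fun v => v ∈ e.1)).biUnion
      (fun v => {v} ×ˢ Finset.range (cap v))
  -- every edge has exactly two endpoints
  have hW2 : ∀ e : Sym2 V, e ∈ G.edgeFinset →
      (univ.filter (fun v => v ∈ e)).card = 2 := by
    intro e he
    induction e using Sym2.ind with
    | _ a b =>
      have hadj : G.Adj a b := by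
        rw [SimpleGraph.mem_edgeFinset, SimpleGraph.mem_edgeSet] at he
        exact he
      have hfe : (univ.filter (fun v => v ∈ s(a,b))) = {a, b} := by
        ext v; simp [Sym2.mem_iff]
      rw [hfe, card_insert_of_notMem (by simpa using hadj.ne), card_singleton]
  have hall : ∀ s : Finset {e : Sym2 V // e ∈ G.edgeFinset},
      s.card ≤ (s.biUnion t).card := by
    intro s
    set W : Finset V := s.biUnion (fun e => univ.filter (fun v => v ∈ e.1)) with hWdef
    have hbu : s.biUnion t = W.biUnion (fun v => {v} ×ˢ Finset.range (cap v)) := by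
      rw [hWdef, biUnion_biUnion]
    have hcard : (s.biUnion t).card = ∑ v ∈ W, cap v := by
      rw [hbu, card_biUnion]
      · refine sum_congr rfl ?_
        intro v _
        simp
      · intro x _ y _ hxy
        simp only [disjoint_left]
        intro p hp hq
        simp only [mem_product, mem_singleton] at hp hq
        exact hxy (hp.1.symm.trans hq.1)
    -- double counting
    have hcount : 2 * s.card = ∑ v ∈ W, (s.filter (fun e => v ∈ e.1)).card := by
      calc 2 * s.card = ∑ _e ∈ s, 2 := by rw [sum_const, smul_eq_mul, mul_comm]
        _ = ∑ e ∈ s, (W.filter (fun v => v ∈ e.1)).card := by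
            refine sum_congr rfl ?_
            intro e he
            have hsub : (univ.filter (fun v => v ∈ e.1)) ⊆ W := by
              intro v hv
              rw [hWdef]
              exact mem_biUnion.2 ⟨e, he, hv⟩
            have heq : W.filter (fun v => v ∈ e.1) = univ.filter (fun v => v ∈ e.1) := by
              apply Subset.antisymm
              · intro v hv
                exact mem_filter.2 ⟨mem_univ v, (mem_filter.1 hv).2⟩
              · intro v hv
                exact mem_filter.2 ⟨hsub hv, (mem_filter.1 hv).2⟩
            rw [heq, hW2 e.1 e.2]
        _ = ∑ e ∈ s, ∑ v ∈ W, (if v ∈ e.1 then 1 else 0) := by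
            refine sum_congr rfl ?_
            intro e _
            rw [card_filter]
        _ = ∑ v ∈ W, ∑ e ∈ s, (if v ∈ e.1 then 1 else 0) := sum_comm
        _ = ∑ v ∈ W, (s.filter (fun e => v ∈ e.1)).card := by
            refine sum_congr rfl ?_
            intro v _
            rw [card_filter]
    have hincident : ∀ v, (s.filter (fun e => v ∈ e.1)).card ≤ G.degree v := by
      intro v
      have hle : (s.filter (fun e => v ∈ e.1)).card ≤ (G.incidenceFinset v).card := by
        apply Finset.card_le_card_of_injOn (fun e => e.1)
        · intro e he
          simp only [Finset.mem_coe, mem_filter] at he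
          rw [Finset.mem_coe, SimpleGraph.mem_incidenceFinset]
          exact ⟨SimpleGraph.mem_edgeFinset.1 e.2, he.2⟩
        · intro e1 _ e2 _ h
          exact Subtype.ext h
      rwa [SimpleGraph.card_incidenceFinset_eq_degree] at hle
    have hdeg : ∀ v, G.degree v ≤ 2 * cap v := by
      intro v
      show G.degree v ≤ 2 * (G.degree v / 2 + 1)
      omega
    have h2 : 2 * s.card ≤ 2 * ∑ v ∈ W, cap v := by
      rw [hcount, mul_sum]
      exact sum_le_sum fun v _ => le_trans (hincident v) (hdeg v)
    rw [hcard]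
    omega
  obtain ⟨f, hfinj, hft⟩ := (Finset.all_card_le_biUnion_card_iff_exists_injective t).1 hall
  have hmem : ∀ {u v : V}, G.Adj u v → s(u,v) ∈ G.edgeFinset := fun h =>
    SimpleGraph.mem_edgeFinset.mpr ((SimpleGraph.mem_edgeSet G).mpr h)
  have key : ∀ e : {e : Sym2 V // e ∈ G.edgeFinset},
      (f e).1 ∈ (e : Sym2 V) ∧ (f e).2 < cap (f e).1 := by
    intro e
    have h := hft e
    simp only [t, mem_biUnion, mem_filter, mem_product, mem_singleton, mem_range,
      mem_univ, true_and] at h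
    obtain ⟨v, hv, h1, h2⟩ := h
    rw [← h1] at hv h2
    exact ⟨hv, h2⟩
  refine ⟨fun u v => ∃ h : G.Adj u v, (f ⟨s(u,v), hmem h⟩).1 = u, ?_, ?_, ?_, ?_⟩
  · intro v ⟨h, _⟩
    exact G.irrefl h
  · intro u v
    constructor
    · rintro (⟨h, _⟩ | ⟨h, _⟩)
      · exact h
      · exact h.symm
    · intro h
      have hswap : (⟨s(v,u), hmem h.symm⟩ : {e : Sym2 V // e ∈ G.edgeFinset})
          = ⟨s(u,v), hmem h⟩ := Subtype.ext (Sym2.eq_swap)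
      rcases (Sym2.mem_iff).1 (key ⟨s(u,v), hmem h⟩).1 with h1 | h1
      · exact Or.inl ⟨h, h1⟩
      · refine Or.inr ⟨h.symm, ?_⟩
        rw [hswap]
        exact h1
  · rintro u v ⟨⟨h1, hf1⟩, ⟨h2, hf2⟩⟩
    have hswap : (⟨s(v,u), hmem h2⟩ : {e : Sym2 V // e ∈ G.edgeFinset})
        = ⟨s(u,v), hmem h1⟩ := Subtype.ext (Sym2.eq_swap)
    rw [hswap, hf1] at hf2
    exact h1.ne hf2
  · intro v
    have hfin : (↑(Finset.range (cap v)) : Set ℕ).Finite := (Finset.range (cap v)).finite_toSet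
    have hle : {u | ∃ h : G.Adj v u, (f ⟨s(v,u), hmem h⟩).1 = v}.ncard
        ≤ (↑(Finset.range (cap v)) : Set ℕ).ncard := by
      refine Set.ncard_le_ncard_of_injOn
        (fun u => if h : G.Adj v u then (f ⟨s(v,u), hmem h⟩).2 else 0) ?_ ?_ hfin
      · rintro u ⟨h, hfst⟩
        simp only [dif_pos h, Finset.coe_range, Set.mem_Iio]
        have := (key ⟨s(v,u), hmem h⟩).2
        rwa [hfst] at this
      · rintro u1 ⟨h1, hfst1⟩ u2 ⟨h2, hfst2⟩ heq
        simp only [dif_pos h1, dif_pos h2] at heq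
        have hfeq : f ⟨s(v,u1), hmem h1⟩ = f ⟨s(v,u2), hmem h2⟩ := by
          apply Prod.ext
          · rw [hfst1, hfst2]
          · exact heq
        have := hfinj hfeq
        have hs : s(v,u1) = s(v,u2) := congrArg Subtype.val this
        exact Sym2.congr_right.1 hs
    rwa [Set.ncard_coe_finset, card_range] at hle
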